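/- Let d ≥ 1, 0 < p0 ≤ q ≤ 1, and let H ∈ W(C_b, L^{p0}). Then ∑_{s∈ℤ^d, |s| > 6√d} Δ^{ε,q}(s) → 0 as ε → 0⁺. -/

import Mathlib

open scoped ENNReal NNReal
open MeasureTheory Metric

attribute [local instance] Classical.propDecidable

noncomputable section

abbrev Ed (d : ℕ) : Type := EuclideanSpace ℝ (Fin d)
abbrev Zd (d : ℕ) : Type := Fin d → ℤ

def zc {d : ℕ} (k : Zd d) : Ed d := WithLp.toLp 2 (fun i => (k i : ℝ))

def lpNorm {ι : Type*} (p : ℝ≥0∞) (c : ι → ℂ) : ℝ :=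
  if p = ∞ then ⨆ i, ‖c i‖ else (∑' i, ‖c i‖ ^ p.toReal) ^ (1 / p.toReal)

def elp {ι : Type*} (p : ℝ) (c : ι → ℂ) : ℝ≥0∞ :=
  (∑' i, (‖c i‖₊ : ℝ≥0∞) ^ p) ^ (1 / p)

def matMul {ι κ : Type*} (a : ι → κ → ℂ) (c : κ → ℂ) : ι → ℂ :=
  fun i => ∑' j, a i j * c j

def MatBoundedOn {ι κ : Type*} (a : ι → κ → ℂ) (p : ℝ≥0∞) : Prop :=
  (∀ c : κ → ℂ, Memℓp c p → (∀ i, Summable fun j => a i j * c j) ∧ Memℓp (matMul a c) p) ∧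
  ∃ C > (0:ℝ), ∀ c : κ → ℂ, Memℓp c p → lpNorm p (matMul a c) ≤ C * lpNorm p c

def MatInvertibleOn {ι κ : Type*} (a : ι → κ → ℂ) (p : ℝ≥0∞) : Prop :=
  MatBoundedOn a p ∧
  (∀ c c' : κ → ℂ, Memℓp c p → Memℓp c' p → matMul a c = matMul a c' → c = c') ∧
  (∀ u : ι → ℂ, Memℓp u p → ∃ c : κ → ℂ, Memℓp c p ∧ matMul a c = u) ∧
  ∃ C > (0:ℝ), ∀ c : κ → ℂ, Memℓp c p → lpNorm p c ≤ C * lpNorm p (matMul a c)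

def RelSep {d : ℕ} (Λ : Set (Ed d)) : Prop :=
  (∀ x : Ed d, (Λ ∩ ball x 1).Finite) ∧ ∃ N : ℕ, ∀ x : Ed d, (Λ ∩ ball x 1).ncard ≤ N

def amalg {d : ℕ} (H : Ed d → ℝ) (x : Ed d) : ℝ :=
  ⨆ y : (closedBall x 1), |H (y : Ed d)|

def MemWiener {d : ℕ} (p : ℝ) (H : Ed d → ℝ) : Prop :=
  Continuous H ∧ (∃ M : ℝ, ∀ x, |H x| ≤ M) ∧ Integrable (fun x => amalg H x ^ p)

def wienerNorm {d : ℕ} (p : ℝ) (H : Ed d → ℝ) : ℝ :=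
  (∫ x, amalg H x ^ p) ^ (1 / p)

def phiAct {d : ℕ} {Γ : Set (Ed d)} (φ : Ed d → ℝ) (ε : ℝ) (k : Zd d) (a : Γ → ℂ) : Γ → ℂ :=
  fun r => (φ (ε • (r : Ed d) - zc k)) • a r

def Phi {d : ℕ} (φ : Ed d → ℝ) (ε : ℝ) (x : Ed d) : ℝ :=
  ∑' k : Zd d, (φ (ε • x - zc k)) ^ 2

def commM {d : ℕ} {Λ Γ : Set (Ed d)} (a : Λ → Γ → ℂ) (φ : Ed d → ℝ) (ε : ℝ) (k j : Zd d) :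
    Λ → Γ → ℂ :=
  fun l r => a l r * (((φ (ε • (r : Ed d) - zc k) - φ (ε • (l : Ed d) - zc k)) : ℝ) : ℂ)
      * ((φ (ε • (r : Ed d) - zc j) : ℝ) : ℂ)

def schurSP {ι κ : Type*} (p : ℝ) (a : ι → κ → ℂ) : ℝ≥0∞ :=
  ⨆ j : κ, ∑' i : ι, (‖a i j‖₊ : ℝ≥0∞) ^ p

def schurE {ι κ : Type*} (a : ι → κ → ℂ) : ℝ≥0∞ :=
  (⨆ j : κ, ∑' i : ι, (‖a i j‖₊ : ℝ≥0∞)) + (⨆ i : ι, ∑' j : κ, (‖a i j‖₊ : ℝ≥0∞))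

def cubeSup {d : ℕ} (H : Ed d → ℝ) (q : ℝ) (t : Zd d) : ℝ :=
  ⨆ z : {z : Ed d // ∀ i, (t i : ℝ) ≤ z i ∧ z i ≤ (t i : ℝ) + 1}, |H (z : Ed d)| ^ q

def DeltaE {d : ℕ} (H : Ed d → ℝ) (ε q : ℝ) (s : Zd d) : ℝ≥0∞ :=
  ∑' t : Zd d, if (∀ i, |ε * (t i : ℝ) - (s i : ℝ)| ≤ 5) then ENNReal.ofReal (cubeSup H q t) else 0

-- cube as a set
def cubeSet {d : ℕ} (t : Zd d) : Set (Ed d) := {z | ∀ i, (t i : ℝ) ≤ z i ∧ z i ≤ (t i : ℝ) + 1}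

lemma zc_mem_cube {d : ℕ} (t : Zd d) : zc t ∈ cubeSet t := by
  intro i
  constructor
  · exact le_refl _
  · simp [zc]

lemma cube_subset_ball {d : ℕ} (t : Zd d) : cubeSet t ⊆ closedBall (zc t) (Real.sqrt d) := by
  intro z hz
  simp only [mem_closedBall]
  rw [EuclideanSpace.dist_eq]
  have h1 : ∑ i : Fin d, dist (z i) (zc t i) ^ 2 ≤ (d : ℝ) := by
    calc ∑ i : Fin d, dist (z i) (zc t i) ^ 2 ≤ ∑ _i : Fin d, (1:ℝ) := by
          apply Finset.sum_le_sum
          intro i _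
          have h := hz i
          have : |z i - (t i : ℝ)| ≤ 1 := by
            rw [abs_le]; constructor <;> [linarith [h.1]; linarith [h.2]]
          have hd : dist (z i) (zc t i) ≤ 1 := by
            rw [Real.dist_eq]; exact this
          nlinarith [dist_nonneg (x := z i) (y := zc t i)]
      _ = (d : ℝ) := by simp
  calc Real.sqrt (∑ i : Fin d, dist (z i) (zc t i) ^ 2) ≤ Real.sqrt d := Real.sqrt_le_sqrt h1

lemma cube_compact {d : ℕ} (t : Zd d) : IsCompact (cubeSet t) := by
  apply isCompact_of_isClosed_isBounded
  · have : cubeSet t = ⋂ i : Fin d, ((fun z : Ed d => z i) ⁻¹' Set.Icc (t i : ℝ) ((t i : ℝ) + 1)) := by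
      ext z; simp [cubeSet, Set.mem_Icc, Set.mem_iInter]
    rw [this]
    exact isClosed_iInter fun i => (isClosed_Icc).preimage (PiLp.continuous_apply 2 _ i)
  · exact (isBounded_closedBall (x := zc t) (r := Real.sqrt d)).subset (cube_subset_ball t)

lemma cube_nonempty {d : ℕ} (t : Zd d) : (cubeSet t).Nonempty := ⟨zc t, zc_mem_cube t⟩

lemma exists_cube_max {d : ℕ} (H : Ed d → ℝ) (hc : Continuous H) (t : Zd d) :
    ∃ z ∈ cubeSet t, ∀ w ∈ cubeSet t, |H w| ≤ |H z| := by
  obtain ⟨z, hz, hmax⟩ := (cube_compact t).exists_isMaxOn (cube_nonempty t)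
    ((continuous_abs.comp hc).continuousOn)
  exact ⟨z, hz, fun w hw => hmax hw⟩

-- choose the max point
def maxPt {d : ℕ} (H : Ed d → ℝ) (hc : Continuous H) (t : Zd d) : Ed d :=
  (exists_cube_max H hc t).choose

lemma maxPt_mem {d : ℕ} (H : Ed d → ℝ) (hc : Continuous H) (t : Zd d) :
    maxPt H hc t ∈ cubeSet t := (exists_cube_max H hc t).choose_spec.1

lemma maxPt_max {d : ℕ} (H : Ed d → ℝ) (hc : Continuous H) (t : Zd d) :
    ∀ w ∈ cubeSet t, |H w| ≤ |H (maxPt H hc t)| := (exists_cube_max H hc t).choose_spec.2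

lemma cubeSup_nonneg {d : ℕ} (H : Ed d → ℝ) (q : ℝ) (t : Zd d) : 0 ≤ cubeSup H q t :=
  Real.iSup_nonneg fun z => Real.rpow_nonneg (abs_nonneg _) q

lemma cubeSup_le_max {d : ℕ} (H : Ed d → ℝ) (hc : Continuous H) {q : ℝ} (hq : 0 < q) (t : Zd d) :
    cubeSup H q t ≤ |H (maxPt H hc t)| ^ q := by
  apply Real.iSup_le (fun z => ?_) (Real.rpow_nonneg (abs_nonneg _) q)
  exact Real.rpow_le_rpow (abs_nonneg _) (maxPt_max H hc t z z.2) hq.le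

lemma le_cubeSup {d : ℕ} (H : Ed d → ℝ) {M : ℝ} (hM : ∀ x, |H x| ≤ M) {q : ℝ} (hq : 0 < q)
    (t : Zd d) (z : Ed d) (hz : z ∈ cubeSet t) : |H z| ^ q ≤ cubeSup H q t := by
  have hbdd : BddAbove (Set.range fun z : {z : Ed d // ∀ i, (t i : ℝ) ≤ z i ∧ z i ≤ (t i : ℝ) + 1}
      => |H (z : Ed d)| ^ q) := by
    refine ⟨(max M 1) ^ q, ?_⟩
    rintro _ ⟨w, rfl⟩
    exact Real.rpow_le_rpow (abs_nonneg _) ((hM w).trans (le_max_left _ _)) hq.le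
  exact le_ciSup hbdd ⟨z, hz⟩

-- H z ≤ amalg H x for x near z
lemma abs_le_amalg {d : ℕ} (H : Ed d → ℝ) {M : ℝ} (hM : ∀ x, |H x| ≤ M) (z x : Ed d)
    (hx : x ∈ closedBall z 1) : |H z| ≤ amalg H x := by
  have hz : z ∈ closedBall x 1 := by rwa [mem_closedBall, dist_comm, ← mem_closedBall]
  have hbdd : BddAbove (Set.range fun y : (closedBall x 1) => |H (y : Ed d)|) := by
    refine ⟨M, ?_⟩; rintro _ ⟨y, rfl⟩; exact hM y
  exact le_ciSup hbdd ⟨z, hz⟩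

lemma tsum_ite_le {α : Type*} (T : Finset α) (P : α → Prop) (c : ℝ≥0∞) (h : ∀ a, P a → a ∈ T) :
    ∑' a, (if P a then c else 0) ≤ (T.card : ℝ≥0∞) * c := by
  calc ∑' a, (if P a then c else 0) ≤ ∑' a, (if a ∈ T then c else 0) := by
        apply ENNReal.tsum_le_tsum
        intro a
        split_ifs with h1 h2
        · exact le_refl c
        · exact absurd (h a h1) h2
        · exact zero_le
        · exact le_refl _
    _ = ∑ a ∈ T, (if a ∈ T then c else 0) := tsum_eq_sum (fun b hb => if_neg hb)
    _ = ∑ _a ∈ T, c := Finset.sum_congr rfl (fun a ha => if_pos ha)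
    _ = (T.card : ℝ≥0∞) * c := by rw [Finset.sum_const, nsmul_eq_mul]

lemma coord_dist_le {d : ℕ} (x y : Ed d) (i : Fin d) : dist (x i) (y i) ≤ dist x y := by
  rw [EuclideanSpace.dist_eq]
  have h : dist (x i) (y i) ^ 2 ≤ ∑ j : Fin d, dist (x j) (y j) ^ 2 :=
    Finset.single_le_sum (f := fun j => dist (x j) (y j) ^ 2) (fun j _ => sq_nonneg _)
      (Finset.mem_univ i)
  calc dist (x i) (y i) = Real.sqrt (dist (x i) (y i) ^ 2) := (Real.sqrt_sq dist_nonneg).symm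
    _ ≤ _ := Real.sqrt_le_sqrt h

lemma sum_cubeSup_lt_top {d : ℕ} (H : Ed d → ℝ) {p₀ : ℝ} (h0 : 0 < p₀) (hH : MemWiener p₀ H) :
    ∑' t : Zd d, ENNReal.ofReal (cubeSup H p₀ t) ≠ ∞ := by
  obtain ⟨hc, ⟨M, hM⟩, hint⟩ := hH
  set g : Ed d → ℝ≥0∞ := fun x => ENNReal.ofReal (amalg H x ^ p₀) with hgdef
  have hg : AEMeasurable g volume := ENNReal.measurable_ofReal.comp_aemeasurable hint.aemeasurable
  have hgint : ∫⁻ x, g x ≠ ∞ := hint.lintegral_lt_top.ne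
  set z : Zd d → Ed d := maxPt H hc with hzdef
  set B : Zd d → Set (Ed d) := fun t => closedBall (z t) 1 with hBdef
  set v : ℝ≥0∞ := volume (closedBall (0 : Ed d) 1) with hvdef
  have hv0 : v ≠ 0 := (measure_closedBall_pos volume 0 one_pos).ne'
  have hvt : v ≠ ∞ := measure_closedBall_lt_top.ne
  -- Step 1
  have step1 : ∀ t : Zd d, ENNReal.ofReal (cubeSup H p₀ t) * v ≤ ∫⁻ x in B t, g x := by
    intro t
    have hμ : volume (B t) = v := Measure.addHaar_closedBall_center volume (z t) 1
    rw [← hμ, ← setLIntegral_const (B t) (ENNReal.ofReal (cubeSup H p₀ t))]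
    apply lintegral_mono_ae
    filter_upwards [ae_restrict_mem measurableSet_closedBall] with x hx
    apply ENNReal.ofReal_le_ofReal
    calc cubeSup H p₀ t ≤ |H (z t)| ^ p₀ := cubeSup_le_max H hc h0 t
      _ ≤ amalg H x ^ p₀ :=
        Real.rpow_le_rpow (abs_nonneg _) (abs_le_amalg H hM (z t) x hx) h0.le
  -- Step 3 (pointwise counting)
  have step3 : ∀ x : Ed d, ∑' t : Zd d, (B t).indicator g x ≤ (4 ^ d : ℝ≥0∞) * g x := by
    intro x
    set T : Finset (Zd d) :=
      Fintype.piFinset fun i : Fin d => Finset.Icc ⌈x i - 2⌉ ⌊x i + 1⌋ with hTdef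
    have hmem : ∀ t : Zd d, x ∈ B t → t ∈ T := by
      intro t ht
      rw [hTdef, Fintype.mem_piFinset]
      intro i
      have h1 : dist (x i) (z t i) ≤ 1 := (coord_dist_le x (z t) i).trans (mem_closedBall.mp ht)
      have h2 := (maxPt_mem H hc t) i
      rw [Real.dist_eq, abs_le] at h1
      rw [Finset.mem_Icc]
      constructor
      · rw [Int.ceil_le]; push_cast; linarith [h2.2]
      · rw [Int.le_floor]; push_cast; linarith [h2.1]
    have hcard : (T.card : ℝ≥0∞) ≤ 4 ^ d := by
      have : T.card ≤ 4 ^ d := by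
        rw [hTdef, Fintype.card_piFinset]
        calc ∏ i : Fin d, (Finset.Icc ⌈x i - 2⌉ ⌊x i + 1⌋).card ≤ ∏ _i : Fin d, 4 := by
              apply Finset.prod_le_prod'
              intro i _
              rw [Int.card_Icc, Int.toNat_le]
              have hcast : ((⌊x i + 1⌋ + 1 - ⌈x i - 2⌉ : ℤ) : ℝ) ≤ 4 := by
                push_cast
                linarith [Int.floor_le (x i + 1), Int.le_ceil (x i - 2)]
              exact_mod_cast hcast
          _ = 4 ^ d := by simp
      calc (T.card : ℝ≥0∞) ≤ ((4 ^ d : ℕ) : ℝ≥0∞) := by exact_mod_cast this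
        _ = 4 ^ d := by push_cast; ring
    calc ∑' t : Zd d, (B t).indicator g x = ∑' t : Zd d, (if x ∈ B t then g x else 0) := by
          apply tsum_congr; intro t; rw [Set.indicator_apply]
      _ ≤ (T.card : ℝ≥0∞) * g x := tsum_ite_le T (fun t => x ∈ B t) (g x) hmem
      _ ≤ (4 ^ d : ℝ≥0∞) * g x := mul_le_mul_left hcard _
  -- combine
  have key : (∑' t : Zd d, ENNReal.ofReal (cubeSup H p₀ t)) * v ≤ (4 ^ d : ℝ≥0∞) * ∫⁻ x, g x := by
    calc (∑' t : Zd d, ENNReal.ofReal (cubeSup H p₀ t)) * v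
        = ∑' t : Zd d, ENNReal.ofReal (cubeSup H p₀ t) * v := ENNReal.tsum_mul_right.symm
      _ ≤ ∑' t : Zd d, ∫⁻ x in B t, g x := ENNReal.tsum_le_tsum step1
      _ = ∑' t : Zd d, ∫⁻ x, (B t).indicator g x := by
          apply tsum_congr; intro t; rw [lintegral_indicator measurableSet_closedBall]
      _ = ∫⁻ x, ∑' t : Zd d, (B t).indicator g x :=
          (lintegral_tsum fun t => hg.indicator measurableSet_closedBall).symm
      _ ≤ ∫⁻ x, (4 ^ d : ℝ≥0∞) * g x := lintegral_mono step3
      _ = (4 ^ d : ℝ≥0∞) * ∫⁻ x, g x := lintegral_const_mul' _ _ (by simp)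
  have hfin : (4 ^ d : ℝ≥0∞) * ∫⁻ x, g x ≠ ∞ := ENNReal.mul_ne_top (by simp) hgint
  by_contra hcon

  rw [hcon, ENNReal.top_mul hv0] at key
  exact (hfin (top_le_iff.mp key))

lemma sum_cubeSupq_lt_top {d : ℕ} (H : Ed d → ℝ) {p₀ q : ℝ} (h0 : 0 < p₀) (hq : p₀ ≤ q)
    (hH : MemWiener p₀ H) :
    ∑' t : Zd d, ENNReal.ofReal (cubeSup H q t) ≠ ∞ := by
  obtain ⟨hc, ⟨M, hM⟩, hint⟩ := hH
  have hq0 : 0 < q := lt_of_lt_of_le h0 hq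
  set C : ℝ := (max M 1) ^ (q - p₀) with hCdef
  have hC0 : 0 ≤ C := Real.rpow_nonneg (le_trans zero_le_one (le_max_right _ _)) _
  have hptwise : ∀ t : Zd d, cubeSup H q t ≤ C * cubeSup H p₀ t := by
    intro t
    apply Real.iSup_le (fun w => ?_) (mul_nonneg hC0 (cubeSup_nonneg H p₀ t))
    have hHb : |H (w : Ed d)| ^ q ≤ C * |H (w : Ed d)| ^ p₀ := by
      rcases eq_or_lt_of_le (abs_nonneg (H (w : Ed d))) with h | h
      · rw [← h, Real.zero_rpow hq0.ne', Real.zero_rpow h0.ne', mul_zero]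
      · rw [show q = (q - p₀) + p₀ by ring, Real.rpow_add h]
        apply mul_le_mul_of_nonneg_right _ (Real.rpow_nonneg (abs_nonneg _) _)
        exact Real.rpow_le_rpow (abs_nonneg _) ((hM _).trans (le_max_left _ _)) (by linarith)
    calc |H (w : Ed d)| ^ q ≤ C * |H (w : Ed d)| ^ p₀ := hHb
      _ ≤ C * cubeSup H p₀ t :=
        mul_le_mul_of_nonneg_left (le_cubeSup H hM h0 t w w.2) hC0
  have hle : ∑' t : Zd d, ENNReal.ofReal (cubeSup H q t)
      ≤ ENNReal.ofReal C * ∑' t : Zd d, ENNReal.ofReal (cubeSup H p₀ t) := by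
    rw [← ENNReal.tsum_mul_left]
    apply ENNReal.tsum_le_tsum
    intro t
    calc ENNReal.ofReal (cubeSup H q t) ≤ ENNReal.ofReal (C * cubeSup H p₀ t) :=
          ENNReal.ofReal_le_ofReal (hptwise t)
      _ = ENNReal.ofReal C * ENNReal.ofReal (cubeSup H p₀ t) := ENNReal.ofReal_mul hC0
  exact (lt_of_le_of_lt hle (ENNReal.mul_lt_top ENNReal.ofReal_lt_top
    (lt_top_iff_ne_top.mpr (sum_cubeSup_lt_top H h0 ⟨hc, ⟨M, hM⟩, hint⟩)))).ne

lemma exists_big_coord {d : ℕ} (s : Zd d) (hs : 6 * Real.sqrt d < ‖zc s‖) :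
    ∃ i, (7 : ℝ) ≤ |(s i : ℝ)| := by
  by_contra hcon
  push_neg at hcon
  have h6 : ∀ i, |(s i : ℝ)| ≤ 6 := by
    intro i
    have h1 : ((|s i| : ℤ) : ℝ) < 7 := by push_cast; exact hcon i
    have h2 : |s i| < (7 : ℤ) := by exact_mod_cast h1
    have h3 : |s i| ≤ (6 : ℤ) := by omega
    have h4 : ((|s i| : ℤ) : ℝ) ≤ 6 := by exact_mod_cast h3
    rwa [Int.cast_abs] at h4
  have hub : ‖zc s‖ ≤ 6 * Real.sqrt d := by
    rw [EuclideanSpace.norm_eq]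
    have hsum : ∑ i : Fin d, ‖zc s i‖ ^ 2 ≤ (36 : ℝ) * d := by
      calc ∑ i : Fin d, ‖zc s i‖ ^ 2 ≤ ∑ _i : Fin d, (36 : ℝ) := by
            apply Finset.sum_le_sum
            intro i _
            have : ‖zc s i‖ ≤ 6 := by rw [Real.norm_eq_abs]; exact h6 i
            nlinarith [norm_nonneg (zc s i)]
        _ = (36 : ℝ) * d := by simp [mul_comm]
    calc Real.sqrt (∑ i : Fin d, ‖zc s i‖ ^ 2) ≤ Real.sqrt ((36 : ℝ) * d) :=
          Real.sqrt_le_sqrt hsum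
      _ = 6 * Real.sqrt d := by
          rw [show (36 : ℝ) * d = 6 ^ 2 * d by norm_num, Real.sqrt_mul (by positivity),
            Real.sqrt_sq (by norm_num)]
  linarith

lemma count_s {d : ℕ} (ε : ℝ) (t : Zd d) (c : ℝ≥0∞) :
    ∑' s : Zd d, (if (∀ i, |ε * (t i : ℝ) - (s i : ℝ)| ≤ 5) then c else 0)
      ≤ (11 ^ d : ℝ≥0∞) * c := by
  set T : Finset (Zd d) :=
    Fintype.piFinset fun i : Fin d => Finset.Icc ⌈ε * (t i : ℝ) - 5⌉ ⌊ε * (t i : ℝ) + 5⌋ with hT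
  have hmem : ∀ s : Zd d, (∀ i, |ε * (t i : ℝ) - (s i : ℝ)| ≤ 5) → s ∈ T := by
    intro s hs
    rw [hT, Fintype.mem_piFinset]
    intro i
    have := hs i
    rw [abs_le] at this
    rw [Finset.mem_Icc]
    constructor
    · rw [Int.ceil_le]; linarith [this.2]
    · rw [Int.le_floor]; linarith [this.1]
  have hcard : (T.card : ℝ≥0∞) ≤ 11 ^ d := by
    have hn : T.card ≤ 11 ^ d := by
      rw [hT, Fintype.card_piFinset]
      calc ∏ i : Fin d, (Finset.Icc ⌈ε * (t i : ℝ) - 5⌉ ⌊ε * (t i : ℝ) + 5⌋).card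
          ≤ ∏ _i : Fin d, 11 := by
            apply Finset.prod_le_prod'
            intro i _
            rw [Int.card_Icc, Int.toNat_le]
            have hcast : ((⌊ε * (t i : ℝ) + 5⌋ + 1 - ⌈ε * (t i : ℝ) - 5⌉ : ℤ) : ℝ) ≤ 11 := by
              push_cast
              linarith [Int.floor_le (ε * (t i : ℝ) + 5), Int.le_ceil (ε * (t i : ℝ) - 5)]
            exact_mod_cast hcast
        _ = 11 ^ d := by simp
    calc (T.card : ℝ≥0∞) ≤ ((11 ^ d : ℕ) : ℝ≥0∞) := by exact_mod_cast hn
      _ = 11 ^ d := by push_cast; ring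
  refine le_trans (le_of_eq (tsum_congr fun s => ?_))
    ((tsum_ite_le T _ c hmem).trans (mul_le_mul_left hcard _))
  split_ifs <;> rfl

theorem stmt13 (d : ℕ) (hd : 1 ≤ d) (p₀ q : ℝ) (h0 : 0 < p₀) (hq : p₀ ≤ q) (hq1 : q ≤ 1)
    (H : Ed d → ℝ) (hH : MemWiener p₀ H) :
    Filter.Tendsto
      (fun ε : ℝ => ∑' s : {s : Zd d // 6 * Real.sqrt d < ‖zc s‖}, DeltaE H ε q (s : Zd d))
      (nhdsWithin 0 (Set.Ioi 0)) (nhds 0) := by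
  have hG : ∑' t : Zd d, ENNReal.ofReal (cubeSup H q t) ≠ ∞ := sum_cubeSupq_lt_top H h0 hq hH
  rw [ENNReal.tendsto_nhds_zero]
  intro δ hδ
  set f : Zd d → ℝ≥0∞ := fun t => ENNReal.ofReal (cubeSup H q t) with hf
  set δ' : ℝ≥0∞ := δ / (11 ^ d : ℝ≥0∞) with hδ'def
  have hδ' : 0 < δ' := ENNReal.div_pos hδ.ne' (by simp)
  obtain ⟨F, hF⟩ : ∃ F : Finset (Zd d), ∑' t : {t : Zd d // t ∉ F}, f (t : Zd d) ≤ δ' := by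
    have h2 := ENNReal.tendsto_tsum_compl_atTop_zero hG
    have h3 := h2.eventually (gt_mem_nhds hδ')
    obtain ⟨F, hF⟩ := h3.exists
    exact ⟨F, hF.le⟩
  set N : ℕ := F.sup (fun t => Finset.univ.sup fun i => (t i).natAbs) with hN
  set ε₀ : ℝ := 1 / (N + 1) with hε₀def
  have hε₀ : 0 < ε₀ := by positivity
  filter_upwards [Ioo_mem_nhdsGT_of_mem (show (0:ℝ) ∈ Set.Ico 0 ε₀ from ⟨le_refl _, hε₀⟩)]
    with ε hε
  obtain ⟨hε1, hε2⟩ := hε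
  -- swap the sums
  have hswap : (∑' s : {s : Zd d // 6 * Real.sqrt d < ‖zc s‖}, DeltaE H ε q (s : Zd d))
      = ∑' t : Zd d, ∑' s : {s : Zd d // 6 * Real.sqrt d < ‖zc s‖},
          (if (∀ i, |ε * (t i : ℝ) - ((s : Zd d) i : ℝ)| ≤ 5) then f t else 0) := by
    simp only [DeltaE]
    exact ENNReal.tsum_comm
  rw [hswap]
  -- bound each t
  have hbound : ∀ t : Zd d,
      (∑' s : {s : Zd d // 6 * Real.sqrt d < ‖zc s‖},
        (if (∀ i, |ε * (t i : ℝ) - ((s : Zd d) i : ℝ)| ≤ 5) then f t else 0))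
      ≤ (if t ∈ F then 0 else (11 ^ d : ℝ≥0∞) * f t) := by
    intro t
    by_cases ht : t ∈ F
    · rw [if_pos ht]
      apply le_of_eq
      have hzero : ∀ s : {s : Zd d // 6 * Real.sqrt d < ‖zc s‖},
          (if (∀ i, |ε * (t i : ℝ) - ((s : Zd d) i : ℝ)| ≤ 5) then f t else 0) = 0 := by
        intro s
        rw [if_neg]
        intro hcond
        obtain ⟨i, hi⟩ := exists_big_coord (s : Zd d) s.2
        have hti : |(t i : ℝ)| ≤ N := by
          have ha : (t i).natAbs ≤ Finset.univ.sup fun j => (t j).natAbs :=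
            Finset.le_sup (f := fun j : Fin d => (t j).natAbs) (Finset.mem_univ i)
          have hb : (Finset.univ.sup fun j => (t j).natAbs) ≤ N :=
            Finset.le_sup (f := fun t : Zd d => Finset.univ.sup fun j => (t j).natAbs) ht
          have h1 : (t i).natAbs ≤ N := ha.trans hb
          have h2 : ((t i).natAbs : ℝ) ≤ N := by exact_mod_cast h1
          rwa [Nat.cast_natAbs, Int.cast_abs] at h2
        have hεt : |ε * (t i : ℝ)| ≤ 1 := by
          rw [abs_mul, abs_of_nonneg hε1.le]
          calc ε * |(t i : ℝ)| ≤ ε₀ * N := by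
                apply mul_le_mul hε2.le hti (abs_nonneg _) hε₀.le
            _ ≤ 1 := by
                rw [hε₀def]
                rw [div_mul_eq_mul_div, div_le_one (by positivity)]
                linarith
        have habs : |((s : Zd d) i : ℝ)| - |ε * (t i : ℝ)| ≤ |ε * (t i : ℝ) - ((s : Zd d) i : ℝ)| := by
          calc |((s : Zd d) i : ℝ)| - |ε * (t i : ℝ)|
              ≤ |((s : Zd d) i : ℝ) - ε * (t i : ℝ)| := abs_sub_abs_le_abs_sub _ _
            _ = |ε * (t i : ℝ) - ((s : Zd d) i : ℝ)| := abs_sub_comm _ _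
        linarith [hcond i]
      calc ∑' s : {s : Zd d // 6 * Real.sqrt d < ‖zc s‖},
            (if (∀ i, |ε * (t i : ℝ) - ((s : Zd d) i : ℝ)| ≤ 5) then f t else 0)
          = ∑' _s : {s : Zd d // 6 * Real.sqrt d < ‖zc s‖}, (0 : ℝ≥0∞) := tsum_congr hzero
        _ = 0 := tsum_zero
    · rw [if_neg ht]
      have hinj : Function.Injective
          (Subtype.val : {s : Zd d // 6 * Real.sqrt d < ‖zc s‖} → Zd d) :=
        Subtype.val_injective
      calc (∑' s : {s : Zd d // 6 * Real.sqrt d < ‖zc s‖},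
            (if (∀ i, |ε * (t i : ℝ) - ((s : Zd d) i : ℝ)| ≤ 5) then f t else 0))
          ≤ ∑' s : Zd d, (if (∀ i, |ε * (t i : ℝ) - (s i : ℝ)| ≤ 5) then f t else 0) :=
            ENNReal.tsum_comp_le_tsum_of_injective hinj
              (fun s : Zd d => if (∀ i, |ε * (t i : ℝ) - (s i : ℝ)| ≤ 5) then f t else 0)
        _ ≤ (11 ^ d : ℝ≥0∞) * f t := count_s ε t (f t)
  calc (∑' t : Zd d, ∑' s : {s : Zd d // 6 * Real.sqrt d < ‖zc s‖},
        (if (∀ i, |ε * (t i : ℝ) - ((s : Zd d) i : ℝ)| ≤ 5) then f t else 0))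
      ≤ ∑' t : Zd d, (if t ∈ F then 0 else (11 ^ d : ℝ≥0∞) * f t) :=
        ENNReal.tsum_le_tsum hbound
    _ = (11 ^ d : ℝ≥0∞) * ∑' t : Zd d, (if t ∈ F then 0 else f t) := by
        rw [← ENNReal.tsum_mul_left]
        apply tsum_congr
        intro t
        split_ifs <;> simp
    _ = (11 ^ d : ℝ≥0∞) * ∑' t : {t : Zd d // t ∉ F}, f (t : Zd d) := by
        congr 1
        have h := tsum_subtype (f := f) {t : Zd d | t ∉ F}
        refine Eq.trans ?_ h.symm
        apply tsum_congr
        intro t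
        rw [Set.indicator_apply]
        by_cases ht : t ∈ F
        · rw [if_pos ht, if_neg (by simpa using ht)]
        · rw [if_neg ht, if_pos (by simpa using ht)]
    _ ≤ (11 ^ d : ℝ≥0∞) * δ' := mul_le_mul_right hF _
    _ ≤ δ := by
        rw [hδ'def]
        exact ENNReal.mul_div_le

end
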